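/- Let T ≤ T' be reals, I := [T,T'], and let K_1, K_2 : ℝ × ℝ → ℂ be continuous and bounded on I². Set K := K_1 + K_2. Suppose r_1, r_2, R̃ : ℝ × ℝ → ℂ are continuous on I² and satisfy, for all t ≤ t' in I, the resolvent equations r_i = K_i + K_i ⋆ r_i (i = 1,2) and R̃ = K + K ⋆ R̃. Define ρ := r_1 + r_2 + r_1 ⋆ r_2 and T̃ := K − ρ + ρ ⋆ K. Then for all t ≤ t' in I, R̃(t',t) = ρ(t',t) + T̃(t',t) + (T̃ ⋆ R̃)(t',t). (Sum-of-∗-resolvents theorem for two kernels, stated for the ordinary parts of the resolvents.) -/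

import Mathlib

open MeasureTheory Set intervalIntegral

/-- Tietze extension helper. -/
lemma my_ext_helper {f : ℝ × ℝ → ℂ} {Q : Set (ℝ × ℝ)} (hQ : IsClosed Q)
    (hf : ContinuousOn f Q) :
    ∃ g : ℝ × ℝ → ℂ, Continuous g ∧ ∀ p ∈ Q, g p = f p := by
  obtain ⟨g, hg⟩ := ContinuousMap.exists_restrict_eq hQ ⟨Q.restrict f, hf.restrict⟩
  exact ⟨g, g.continuous, fun p hp => congrFun (congrArg ContinuousMap.toFun hg) ⟨p, hp⟩⟩

/-- joint continuity of a volterra-type convolution of globally continuous kernels -/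
lemma my_conv_cont {F G : ℝ → ℝ → ℂ} (hF : Continuous fun p : ℝ × ℝ => F p.1 p.2)
    (hG : Continuous fun p : ℝ × ℝ => G p.1 p.2) :
    Continuous fun p : ℝ × ℝ => ∫ s in p.2..p.1, F p.1 s * G s p.2 := by
  have hfc : Continuous (Function.uncurry fun (p : ℝ × ℝ) s => F p.1 s * G s p.2) := by
    apply Continuous.mul
    · exact hF.comp ((continuous_fst.comp continuous_fst).prodMk continuous_snd)
    · exact hG.comp (continuous_snd.prodMk (continuous_snd.comp continuous_fst))
  have h1 := intervalIntegral.continuous_parametric_intervalIntegral_of_continuous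
    (μ := volume) (a₀ := (0:ℝ)) hfc continuous_fst
  have h2 := intervalIntegral.continuous_parametric_intervalIntegral_of_continuous
    (μ := volume) (a₀ := (0:ℝ)) hfc continuous_snd
  refine (h1.sub h2).congr fun p => ?_
  have hi : ∀ a b : ℝ, IntervalIntegrable (fun s => F p.1 s * G s p.2) volume a b :=
    fun a b => ((hF.comp (continuous_const.prodMk continuous_id)).mul
      (hG.comp (continuous_id.prodMk continuous_const))).intervalIntegrable a b
  exact intervalIntegral.integral_interval_sub_left (hi 0 p.1) (hi 0 p.2)
open MeasureTheory Set intervalIntegral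

lemma my_triangle_swap (f : ℝ → ℝ → ℂ) (hf : Continuous fun p : ℝ × ℝ => f p.1 p.2)
    {t t' : ℝ} (h : t ≤ t') :
    (∫ τ in t..t', ∫ s in τ..t', f s τ) = ∫ s in t..t', ∫ τ in t..s, f s τ := by
  obtain ⟨M, hM⟩ : ∃ M : ℝ, ∀ p ∈ Icc t t' ×ˢ Icc t t', ‖f p.1 p.2‖ ≤ M := by
    rcases (isCompact_Icc.prod isCompact_Icc).exists_bound_of_continuousOn
      (hf.continuousOn) with ⟨M, hM⟩
    exact ⟨M, hM⟩
  set μ := volume.restrict (Ioc t t') with hμ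
  haveI : IsFiniteMeasure μ := by
    constructor
    rw [hμ, Measure.restrict_apply MeasurableSet.univ, Set.univ_inter, Real.volume_Ioc]
    exact ENNReal.ofReal_lt_top
  set F : ℝ × ℝ → ℂ := ({q : ℝ × ℝ | q.1 < q.2}).indicator (fun q => f q.2 q.1) with hF
  have hFmeas : StronglyMeasurable F :=
    ((hf.comp continuous_swap).stronglyMeasurable).indicator
      (measurableSet_lt measurable_fst measurable_snd)
  have hFint : Integrable (Function.uncurry fun τ s => F (τ, s)) (μ.prod μ) := by
    have : Function.uncurry (fun τ s => F (τ, s)) = F := rfl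
    rw [this]
    refine Integrable.mono' (integrable_const M) hFmeas.aestronglyMeasurable ?_
    rw [hμ, Measure.prod_restrict]
    refine (ae_restrict_iff' ((measurableSet_Ioc).prod measurableSet_Ioc)).2 ?_
    refine ae_of_all _ fun q hq => ?_
    calc ‖F q‖ ≤ ‖f q.2 q.1‖ := norm_indicator_le_norm_self _ _
    _ ≤ M := hM (q.2, q.1) ⟨Ioc_subset_Icc_self hq.2, Ioc_subset_Icc_self hq.1⟩
  calc (∫ τ in t..t', ∫ s in τ..t', f s τ)
      = ∫ τ in Ioc t t', ∫ s in Ioc t t', F (τ, s) ∂volume ∂volume := by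
        rw [intervalIntegral.integral_of_le h]
        refine setIntegral_congr_fun measurableSet_Ioc fun τ hτ => ?_
        rw [intervalIntegral.integral_of_le hτ.2]
        have : Ioc τ t' = Ioc t t' ∩ Ioi τ := by
          rw [Set.Ioc_inter_Ioi, sup_eq_right.2 hτ.1.le]
        rw [this, ← setIntegral_indicator measurableSet_Ioi]
        refine setIntegral_congr_fun measurableSet_Ioc fun s _ => ?_
        simp [hF, Set.indicator_apply]
    _ = ∫ s in Ioc t t', ∫ τ in Ioc t t', F (τ, s) ∂volume ∂volume :=
        integral_integral_swap hFint
    _ = ∫ s in t..t', ∫ τ in t..s, f s τ := by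
        rw [intervalIntegral.integral_of_le h]
        refine setIntegral_congr_fun measurableSet_Ioc fun s hs => ?_
        have hset : Ioc t t' ∩ Iio s = Ioo t s := by
          ext τ; simp only [Set.mem_inter_iff, Set.mem_Ioc, Set.mem_Iio, Set.mem_Ioo]
          constructor
          · rintro ⟨⟨h1, _⟩, h3⟩; exact ⟨h1, h3⟩
          · rintro ⟨h1, h2⟩; exact ⟨⟨h1, (h2.le.trans hs.2)⟩, h2⟩
        calc (∫ τ in Ioc t t', F (τ, s))
            = ∫ τ in Ioc t t', (Iio s).indicator (fun τ => f s τ) τ := by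
              refine setIntegral_congr_fun measurableSet_Ioc fun τ _ => ?_
              simp [hF, Set.indicator_apply]
          _ = ∫ τ in Ioc t t' ∩ Iio s, f s τ := setIntegral_indicator measurableSet_Iio
          _ = ∫ τ in Ioo t s, f s τ := by rw [hset]
          _ = ∫ τ in Ioc t s, f s τ := (integral_Ioc_eq_integral_Ioo).symm
          _ = ∫ τ in t..s, f s τ := (intervalIntegral.integral_of_le hs.1.le).symm
open MeasureTheory Set intervalIntegral

lemma my_key (K' P R' : ℝ → ℝ → ℂ)
    (hK' : Continuous fun p : ℝ × ℝ => K' p.1 p.2)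
    (hP : Continuous fun p : ℝ × ℝ => P p.1 p.2)
    (hR' : Continuous fun p : ℝ × ℝ => R' p.1 p.2)
    (t t' : ℝ) (htt : t ≤ t')
    (hres : ∀ a ∈ Set.Icc t t', R' a t = K' a t + ∫ s in t..a, K' a s * R' s t)
    (my_triangle_swap : ∀ (f : ℝ → ℝ → ℂ), (Continuous fun p : ℝ × ℝ => f p.1 p.2) →
      (∫ τ in t..t', ∫ s in τ..t', f s τ) = ∫ s in t..t', ∫ τ in t..s, f s τ)
    (my_conv_cont : ∀ {F G : ℝ → ℝ → ℂ}, (Continuous fun p : ℝ × ℝ => F p.1 p.2) →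
      (Continuous fun p : ℝ × ℝ => G p.1 p.2) →
      Continuous fun p : ℝ × ℝ => ∫ s in p.2..p.1, F p.1 s * G s p.2) :
    R' t' t = P t' t + (K' t' t - P t' t + ∫ s in t..t', P t' s * K' s t)
      + ∫ τ in t..t', (K' t' τ - P t' τ + ∫ s in τ..t', P t' s * K' s τ) * R' τ t := by
  -- slice continuity helpers
  have slice1 : ∀ (F : ℝ → ℝ → ℂ), (Continuous fun p : ℝ × ℝ => F p.1 p.2) →
      ∀ a, Continuous fun s => F a s := fun F hF a =>
    hF.comp (continuous_const.prodMk continuous_id)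
  have slice2 : ∀ (F : ℝ → ℝ → ℂ), (Continuous fun p : ℝ × ℝ => F p.1 p.2) →
      ∀ b, Continuous fun s => F s b := fun F hF b =>
    hF.comp (continuous_id.prodMk continuous_const)
  -- C τ = ∫ s in τ..t', P t' s * K' s τ
  set C : ℝ → ℂ := fun τ => ∫ s in τ..t', P t' s * K' s τ with hCdef
  have hC : Continuous C := by
    have := (my_conv_cont hP hK').comp
      ((continuous_const (y := t')).prodMk continuous_id)
    exact this
  -- D a = ∫ s in t..a, K' a s * R' s t
  set D : ℝ → ℂ := fun a => ∫ s in t..a, K' a s * R' s t with hDdef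
  have hD : Continuous D := by
    have hfc : Continuous (Function.uncurry fun (a : ℝ) s => K' a s * R' s t) := by
      apply Continuous.mul
      · exact hK'.comp (continuous_fst.prodMk continuous_snd)
      · exact (slice2 R' hR' t).comp continuous_snd
    exact intervalIntegral.continuous_parametric_intervalIntegral_of_continuous
      (μ := volume) (a₀ := t) hfc continuous_id
  have hint : ∀ (g : ℝ → ℂ), Continuous g → IntervalIntegrable g volume t t' :=
    fun g hg => hg.intervalIntegrable t t'
  -- step A : split the big integral
  have hA : (∫ τ in t..t', (K' t' τ - P t' τ + C τ) * R' τ t)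
      = (∫ τ in t..t', K' t' τ * R' τ t) - (∫ τ in t..t', P t' τ * R' τ t)
        + ∫ τ in t..t', C τ * R' τ t := by
    have e : ∀ τ, (K' t' τ - P t' τ + C τ) * R' τ t
        = (K' t' τ * R' τ t - P t' τ * R' τ t) + C τ * R' τ t := fun τ => by ring
    rw [intervalIntegral.integral_congr (g := fun τ =>
      (K' t' τ * R' τ t - P t' τ * R' τ t) + C τ * R' τ t) (fun τ _ => e τ)]
    rw [intervalIntegral.integral_add
      (((hint (fun τ => K' t' τ * R' τ t) ((slice1 K' hK' t').mul (slice2 R' hR' t))).sub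
        (hint (fun τ => P t' τ * R' τ t) ((slice1 P hP t').mul (slice2 R' hR' t)))))
      (hint (fun τ => C τ * R' τ t) (hC.mul (slice2 R' hR' t))),
      intervalIntegral.integral_sub (hint (fun τ => K' t' τ * R' τ t) ((slice1 K' hK' t').mul (slice2 R' hR' t)))
        (hint (fun τ => P t' τ * R' τ t) ((slice1 P hP t').mul (slice2 R' hR' t)))]
  -- step B : expand R' in the middle integral using the resolvent equation
  have hB : (∫ τ in t..t', P t' τ * R' τ t)
      = (∫ τ in t..t', P t' τ * K' τ t) + ∫ τ in t..t', P t' τ * D τ := by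
    have e : ∀ τ ∈ Set.uIcc t t', P t' τ * R' τ t
        = P t' τ * K' τ t + P t' τ * D τ := by
      intro τ hτ
      rw [Set.uIcc_of_le htt] at hτ
      rw [hres τ hτ, mul_add]
    rw [intervalIntegral.integral_congr e,
      intervalIntegral.integral_add (hint (fun τ => P t' τ * K' τ t) ((slice1 P hP t').mul (slice2 K' hK' t)))
        (hint (fun τ => P t' τ * D τ) ((slice1 P hP t').mul hD))]
  -- step C : Fubini
  have hCswap : (∫ τ in t..t', C τ * R' τ t) = ∫ τ in t..t', P t' τ * D τ := by
    have e : ∀ τ ∈ Set.uIcc t t', C τ * R' τ t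
        = ∫ s in τ..t', P t' s * K' s τ * R' τ t := by
      intro τ _
      rw [hCdef]
      exact (intervalIntegral.integral_mul_const _ _).symm
    rw [intervalIntegral.integral_congr e]
    have hf : Continuous fun p : ℝ × ℝ => P t' p.1 * K' p.1 p.2 * R' p.2 t := by
      apply Continuous.mul
      · exact ((slice1 P hP t').comp continuous_fst).mul hK'
      · exact (slice2 R' hR' t).comp continuous_snd
    rw [my_triangle_swap (fun s τ => P t' s * K' s τ * R' τ t) hf]
    refine intervalIntegral.integral_congr fun s _ => ?_
    rw [hDdef]
    simp only
    rw [← intervalIntegral.integral_const_mul]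
    refine intervalIntegral.integral_congr fun τ _ => by ring
  have hRtt := hres t' (Set.right_mem_Icc.2 htt)
  rw [← hCdef] at *
  rw [hA, hB, hCswap, hRtt]
  ring



/-- Volterra convolution: `(F ⋆ G)(t',t) = ∫_t^{t'} F(t',τ)·G(τ,t) dτ`. -/
noncomputable def volterraConv (F G : ℝ → ℝ → ℂ) : ℝ → ℝ → ℂ :=
  fun t' t => ∫ τ in t..t', F t' τ * G τ t

/-- Sum-of-∗-resolvents theorem for two kernels, stated for the ordinary
parts of the resolvents: if `r₁, r₂, R̃` solve the resolvent equations for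
`K₁`, `K₂` and `K = K₁ + K₂` respectively, then with
`ρ = r₁ + r₂ + r₁ ⋆ r₂` and `T̃ = K − ρ + ρ ⋆ K` one has
`R̃ = ρ + T̃ + T̃ ⋆ R̃` on `t ≤ t'` in `I = [T,T']`. -/
theorem stmt_9 (T T' : ℝ) (hTT : T ≤ T')
    (K₁ K₂ : ℝ → ℝ → ℂ)
    (hK1cont : ContinuousOn (fun p : ℝ × ℝ => K₁ p.1 p.2)
      (Set.Icc T T' ×ˢ Set.Icc T T'))
    (hK2cont : ContinuousOn (fun p : ℝ × ℝ => K₂ p.1 p.2)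
      (Set.Icc T T' ×ˢ Set.Icc T T'))
    (hK1bdd : ∃ C : ℝ, ∀ t' ∈ Set.Icc T T', ∀ t ∈ Set.Icc T T', ‖K₁ t' t‖ ≤ C)
    (hK2bdd : ∃ C : ℝ, ∀ t' ∈ Set.Icc T T', ∀ t ∈ Set.Icc T T', ‖K₂ t' t‖ ≤ C)
    (K : ℝ → ℝ → ℂ) (hK : ∀ t' t, K t' t = K₁ t' t + K₂ t' t)
    (r₁ r₂ R : ℝ → ℝ → ℂ)
    (hr1cont : ContinuousOn (fun p : ℝ × ℝ => r₁ p.1 p.2)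
      (Set.Icc T T' ×ˢ Set.Icc T T'))
    (hr2cont : ContinuousOn (fun p : ℝ × ℝ => r₂ p.1 p.2)
      (Set.Icc T T' ×ˢ Set.Icc T T'))
    (hRcont : ContinuousOn (fun p : ℝ × ℝ => R p.1 p.2)
      (Set.Icc T T' ×ˢ Set.Icc T T'))
    (hr1 : ∀ t ∈ Set.Icc T T', ∀ t' ∈ Set.Icc T T', t ≤ t' →
      r₁ t' t = K₁ t' t + volterraConv K₁ r₁ t' t)
    (hr2 : ∀ t ∈ Set.Icc T T', ∀ t' ∈ Set.Icc T T', t ≤ t' →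
      r₂ t' t = K₂ t' t + volterraConv K₂ r₂ t' t)
    (hRres : ∀ t ∈ Set.Icc T T', ∀ t' ∈ Set.Icc T T', t ≤ t' →
      R t' t = K t' t + volterraConv K R t' t)
    (ρ : ℝ → ℝ → ℂ)
    (hρ : ∀ t' t, ρ t' t = r₁ t' t + r₂ t' t + volterraConv r₁ r₂ t' t)
    (Ttil : ℝ → ℝ → ℂ)
    (hTtil : ∀ t' t, Ttil t' t = K t' t - ρ t' t + volterraConv ρ K t' t) :
    ∀ t ∈ Set.Icc T T', ∀ t' ∈ Set.Icc T T', t ≤ t' →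
      R t' t = ρ t' t + Ttil t' t + volterraConv Ttil R t' t := by
  intro t ht t' ht' htt'
  have hQc : IsClosed (Set.Icc T T' ×ˢ Set.Icc T T') := isClosed_Icc.prod isClosed_Icc
  have hKcont : ContinuousOn (fun p : ℝ × ℝ => K p.1 p.2)
      (Set.Icc T T' ×ˢ Set.Icc T T') := by
    have : (fun p : ℝ × ℝ => K p.1 p.2) = fun p : ℝ × ℝ => K₁ p.1 p.2 + K₂ p.1 p.2 :=
      funext fun p => hK _ _
    rw [this]; exact hK1cont.add hK2cont
  obtain ⟨gK, hgKc, hgK⟩ := my_ext_helper hQc hKcont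
  obtain ⟨g1, hg1c, hg1⟩ := my_ext_helper hQc hr1cont
  obtain ⟨g2, hg2c, hg2⟩ := my_ext_helper hQc hr2cont
  obtain ⟨gR, hgRc, hgR⟩ := my_ext_helper hQc hRcont
  set K' : ℝ → ℝ → ℂ := fun a b => gK (a, b) with hK'def
  set R' : ℝ → ℝ → ℂ := fun a b => gR (a, b) with hR'def
  set r₁' : ℝ → ℝ → ℂ := fun a b => g1 (a, b) with hr1'def
  set r₂' : ℝ → ℝ → ℂ := fun a b => g2 (a, b) with hr2'def
  have hK'c : Continuous fun p : ℝ × ℝ => K' p.1 p.2 := hgKc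
  have hR'c : Continuous fun p : ℝ × ℝ => R' p.1 p.2 := hgRc
  have hr1'c : Continuous fun p : ℝ × ℝ => r₁' p.1 p.2 := hg1c
  have hr2'c : Continuous fun p : ℝ × ℝ => r₂' p.1 p.2 := hg2c
  set P : ℝ → ℝ → ℂ := fun a b => r₁' a b + r₂' a b + ∫ s in b..a, r₁' a s * r₂' s b
    with hPdef
  have hPc : Continuous fun p : ℝ × ℝ => P p.1 p.2 :=
    ((hr1'c.add hr2'c).add (my_conv_cont hr1'c hr2'c))
  have hsub : ∀ b ∈ Set.Icc t t', b ∈ Set.Icc T T' :=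
    fun b hb => ⟨ht.1.trans hb.1, hb.2.trans ht'.2⟩
  -- pointwise identifications on the region
  have hKeq : ∀ a ∈ Set.Icc T T', ∀ b ∈ Set.Icc T T', K' a b = K a b :=
    fun a ha b hb => hgK (a, b) ⟨ha, hb⟩
  have hReq : ∀ a ∈ Set.Icc T T', ∀ b ∈ Set.Icc T T', R' a b = R a b :=
    fun a ha b hb => hgR (a, b) ⟨ha, hb⟩
  have hPρ : ∀ b ∈ Set.Icc t t', P t' b = ρ t' b := by
    intro b hb
    have hbI := hsub b hb
    have hbt' : b ≤ t' := hb.2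
    have hcong : ∀ s ∈ Set.uIcc b t', r₁' t' s * r₂' s b = r₁ t' s * r₂ s b := by
      intro s hs
      rw [Set.uIcc_of_le hbt'] at hs
      have hsI : s ∈ Set.Icc T T' := ⟨hbI.1.trans hs.1, hs.2.trans ht'.2⟩
      have e1 : r₁' t' s = r₁ t' s := hg1 (t', s) ⟨ht', hsI⟩
      have e2 : r₂' s b = r₂ s b := hg2 (s, b) ⟨hsI, hbI⟩
      rw [e1, e2]
    rw [hρ t' b, volterraConv]
    show r₁' t' b + r₂' t' b + (∫ s in b..t', r₁' t' s * r₂' s b)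
      = r₁ t' b + r₂ t' b + ∫ τ in b..t', r₁ t' τ * r₂ τ b
    have e1 : r₁' t' b = r₁ t' b := hg1 (t', b) ⟨ht', hbI⟩
    have e2 : r₂' t' b = r₂ t' b := hg2 (t', b) ⟨ht', hbI⟩
    rw [e1, e2, intervalIntegral.integral_congr hcong]
  have hres : ∀ a ∈ Set.Icc t t', R' a t = K' a t + ∫ s in t..a, K' a s * R' s t := by
    intro a ha
    have haI := hsub a ha
    have htI := hsub t (Set.left_mem_Icc.2 htt')
    have h0 := hRres t htI a haI ha.1
    rw [volterraConv] at h0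
    have hcong : ∀ s ∈ Set.uIcc t a, K' a s * R' s t = K a s * R s t := by
      intro s hs
      rw [Set.uIcc_of_le ha.1] at hs
      have hsI : s ∈ Set.Icc T T' := ⟨htI.1.trans hs.1, hs.2.trans haI.2⟩
      rw [hKeq a haI s hsI, hReq s hsI t htI]
    rw [hReq a haI t htI, hKeq a haI t htI,
      intervalIntegral.integral_congr hcong]
    exact h0
  have hTtilEq : ∀ b ∈ Set.Icc t t',
      Ttil t' b = K' t' b - P t' b + ∫ s in b..t', P t' s * K' s b := by
    intro b hb
    have hbI := hsub b hb
    have hcong : ∀ s ∈ Set.uIcc b t', P t' s * K' s b = ρ t' s * K s b := by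
      intro s hs
      rw [Set.uIcc_of_le hb.2] at hs
      have hst : s ∈ Set.Icc t t' := ⟨hb.1.trans hs.1, hs.2⟩
      rw [hPρ s hst, hKeq s (hsub s hst) b hbI]
    rw [hTtil t' b, volterraConv, hKeq t' ht' b hbI, hPρ b hb,
      intervalIntegral.integral_congr hcong]
  have hkey := my_key K' P R' hK'c hPc hR'c t t' htt' hres
    (fun f hf => my_triangle_swap f hf htt')
    (fun {F G} hF hG => my_conv_cont hF hG)
  have h4 : volterraConv Ttil R t' t
      = ∫ τ in t..t', (K' t' τ - P t' τ + ∫ s in τ..t', P t' s * K' s τ) * R' τ t := by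
    rw [volterraConv]
    refine intervalIntegral.integral_congr fun τ hτ => ?_
    rw [Set.uIcc_of_le htt'] at hτ
    rw [hTtilEq τ hτ, hReq τ (hsub τ hτ) t (hsub t (Set.left_mem_Icc.2 htt'))]
  rw [← hReq t' ht' t ht, ← hPρ t (Set.left_mem_Icc.2 htt'),
    hTtilEq t (Set.left_mem_Icc.2 htt'), h4]
  exact hkey
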